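/- arXiv:1806.07646 — 3 statements merged into one kernel-verified Lean document; each statement's English description precedes it below -/
import Mathlib

section
/- If a probability density f on (0,∞) is continuously differentiable, positive, and satisfies Lin's condition on (0,∞) (i.e., L_f is monotone increasing on (0,∞) and L_f(x) → +∞ as x → +∞), then for every r > 0 the density f_r(x) = (1/r) x^{1/r - 1} f(x^{1/r}) of X^r also satisfies Lin's condition on (0,∞). -/
open MeasureTheory Set Filter Real

lemma key_lin (f : ℝ → ℝ)
    (hf : ContDiffOn ℝ 1 f (Set.Ioi 0))
    (hfpos : ∀ x ∈ Set.Ioi (0 : ℝ), 0 < f x)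
    (c : ℝ) (hc : 0 < c) (x : ℝ) (hx : 0 < x) :
    -x * deriv (fun y : ℝ => c * y ^ (c - 1) * f (y ^ c)) x /
      (c * x ^ (c - 1) * f (x ^ c))
      = (1 - c) + c * (-(x ^ c) * deriv f (x ^ c) / f (x ^ c)) := by
  have hx0 : x ≠ 0 := ne_of_gt hx
  have ha : (0 : ℝ) < x ^ c := Real.rpow_pos_of_pos hx c
  have hfa : 0 < f (x ^ c) := hfpos _ ha
  have hfd : HasDerivAt f (deriv f (x ^ c)) (x ^ c) := by
    have : DifferentiableAt ℝ f (x ^ c) := by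
      have := (hf.contDiffAt (isOpen_Ioi.mem_nhds ha)).differentiableAt one_ne_zero
      exact this
    exact this.hasDerivAt
  have h1 : HasDerivAt (fun y : ℝ => y ^ c) (c * x ^ (c - 1)) x :=
    Real.hasDerivAt_rpow_const (Or.inl hx0)
  have h2 : HasDerivAt (fun y : ℝ => f (y ^ c))
      (deriv f (x ^ c) * (c * x ^ (c - 1))) x := hfd.comp x h1
  have h3 : HasDerivAt (fun y : ℝ => y ^ (c - 1)) ((c - 1) * x ^ (c - 1 - 1)) x :=
    Real.hasDerivAt_rpow_const (Or.inl hx0)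
  have h4 : HasDerivAt (fun y : ℝ => c * y ^ (c - 1) * f (y ^ c))
      (c * ((c - 1) * x ^ (c - 1 - 1)) * f (x ^ c)
        + c * x ^ (c - 1) * (deriv f (x ^ c) * (c * x ^ (c - 1)))) x :=
    (h3.const_mul c).mul h2
  rw [h4.deriv]
  have e1 : x ^ (c - 1) = x ^ c / x := by
    rw [Real.rpow_sub hx, Real.rpow_one]
  have e2 : x ^ (c - 1 - 1) = x ^ c / x / x := by
    rw [Real.rpow_sub hx, Real.rpow_sub hx, Real.rpow_one]
  rw [e1, e2]
  have hA : x ^ c ≠ 0 := ne_of_gt ha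
  field_simp
  ring

/-- If a probability density `f` on `(0,∞)` is continuously differentiable,
positive, and satisfies Lin's condition on `(0,∞)`, then for every `r > 0` the density
`f_r x = (1/r) x^(1/r - 1) f (x^(1/r))` of `X^r` also satisfies Lin's condition on `(0,∞)`. -/
theorem stmt1 (f : ℝ → ℝ)
    (hf : ContDiffOn ℝ 1 f (Set.Ioi 0))
    (hfpos : ∀ x ∈ Set.Ioi (0 : ℝ), 0 < f x)
    (hfzero : ∀ x ≤ (0 : ℝ), f x = 0)
    (hfint : ∫ x, f x = 1)
    (hLmono : MonotoneOn (fun x => -x * deriv f x / f x) (Set.Ioi 0))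
    (hLtop : Tendsto (fun x => -x * deriv f x / f x) atTop atTop)
    (r : ℝ) (hr : 0 < r) :
    MonotoneOn
        (fun x => -x * deriv (fun y : ℝ => (1 / r) * y ^ (1 / r - 1) * f (y ^ (1 / r))) x /
          ((1 / r) * x ^ (1 / r - 1) * f (x ^ (1 / r)))) (Set.Ioi 0) ∧
      Tendsto
        (fun x => -x * deriv (fun y : ℝ => (1 / r) * y ^ (1 / r - 1) * f (y ^ (1 / r))) x /
          ((1 / r) * x ^ (1 / r - 1) * f (x ^ (1 / r)))) atTop atTop := by
  set c : ℝ := 1 / r with hcdef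
  have hc : 0 < c := by positivity
  have key := key_lin f hf hfpos c hc
  constructor
  · intro x hx y hy hxy
    simp only
    rw [key x hx, key y hy]
    have hmx : x ^ c ∈ Set.Ioi (0 : ℝ) := Real.rpow_pos_of_pos hx c
    have hmy : y ^ c ∈ Set.Ioi (0 : ℝ) := Real.rpow_pos_of_pos hy c
    have hle : x ^ c ≤ y ^ c := Real.rpow_le_rpow (le_of_lt hx) hxy hc.le
    have := hLmono hmx hmy hle
    simp only at this
    have : -(x ^ c) * deriv f (x ^ c) / f (x ^ c) ≤ -(y ^ c) * deriv f (y ^ c) / f (y ^ c) := by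
      simpa using this
    nlinarith [this, hc.le, mul_le_mul_of_nonneg_left this hc.le]
  · have ht1 : Tendsto (fun x : ℝ => -(x ^ c) * deriv f (x ^ c) / f (x ^ c)) atTop atTop := by
      have := hLtop.comp (tendsto_rpow_atTop hc)
      simpa [Function.comp_def] using this
    have ht2 : Tendsto (fun x : ℝ => (1 - c) + c * (-(x ^ c) * deriv f (x ^ c) / f (x ^ c)))
        atTop atTop := tendsto_atTop_add_const_left _ _ (ht1.const_mul_atTop hc)
    refine ht2.congr' ?_
    filter_upwards [eventually_gt_atTop (0 : ℝ)] with x hx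
    exact (key x hx).symm
end

section
/- Let f₁, f₂ be continuous probability densities positive on (0,∞) and vanishing elsewhere, with quantile points u_{m,j} for f₁ and v_{m,j} for f₂ (defined by ∫_{u_{m,j}}^{u_{m,j+1}} f₁ = 2^{-m} and analogously for v). For each m, let K_m = ⋃_{j=0}^{2^m−1} (u_{m,j}, u_{m,j+1}) × (v_{m,j}, v_{m,j+1}) and define f_m(x₁,x₂) = 2^m f₁(x₁) f₂(x₂) on K_m and 0 elsewhere. Then f_m is a probability density on ℝ², and its marginal densities are f₁ and f₂: ∫_ℝ f_m(x₁, x₂) dx₂ = f₁(x₁) for almost every x₁, and ∫_ℝ f_m(x₁, x₂) dx₁ = f₂(x₂) for almost every x₂. -/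
open MeasureTheory Set Filter Real Classical

/-- The `j`-th quantile interval at level `m`: `(u j, u (j+1))`, except the last one,
which is `(u (2^m - 1), +∞)`. -/
def quantInterval (u : ℕ → ℝ) (m j : ℕ) : Set ℝ :=
  if j + 1 = 2 ^ m then Set.Ioi (u j) else Set.Ioo (u j) (u (j + 1))

lemma qi_meas (u : ℕ → ℝ) (m j : ℕ) : MeasurableSet (quantInterval u m j) := by
  unfold quantInterval; split <;> measurability

lemma qi_subset (u : ℕ → ℝ) (m j : ℕ) : quantInterval u m j ⊆ Set.Ioi (u j) := by
  unfold quantInterval; split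
  · exact subset_rfl
  · exact fun x hx => hx.1

lemma u_mono (m : ℕ) (u : ℕ → ℝ) (humono : ∀ j, j + 1 < 2 ^ m → u j < u (j + 1)) :
    ∀ i j, i ≤ j → j < 2 ^ m → u i ≤ u j := by
  intro i j hij hj
  induction j with
  | zero => simp_all
  | succ k ih =>
    rcases Nat.lt_or_ge i (k+1) with h | h
    · exact le_trans (ih (Nat.lt_succ_iff.mp h) (Nat.lt_of_succ_lt hj)) (humono k hj).le
    · have : i = k + 1 := le_antisymm hij h
      simp [this]

lemma qi_disjoint (m : ℕ) (u : ℕ → ℝ) (humono : ∀ j, j + 1 < 2 ^ m → u j < u (j + 1)) :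
    ∀ i j, i < j → j < 2 ^ m → Disjoint (quantInterval u m i) (quantInterval u m j) := by
  intro i j hij hj
  have hi1 : i + 1 < 2 ^ m := lt_of_le_of_lt (Nat.succ_le_of_lt hij) hj
  have hA : quantInterval u m i ⊆ Set.Iio (u (i+1)) := by
    unfold quantInterval
    rw [if_neg hi1.ne]
    exact fun x hx => hx.2
  have hB : quantInterval u m j ⊆ Set.Ioi (u j) := qi_subset u m j
  have hle : u (i+1) ≤ u j := u_mono m u humono (i+1) j (Nat.succ_le_of_lt hij) hj
  exact Set.disjoint_of_subset hA hB (by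
    rw [Set.disjoint_left]; intro x hx hx'
    exact absurd (lt_of_le_of_lt hle hx') (not_lt.mpr hx.le))

lemma qi_pairwise (m : ℕ) (u : ℕ → ℝ) (humono : ∀ j, j + 1 < 2 ^ m → u j < u (j + 1)) :
    Set.Pairwise ↑(Finset.range (2 ^ m)) (Function.onFun Disjoint (quantInterval u m)) := by
  intro i hi j hj hij
  simp only [Finset.coe_range, Set.mem_Iio] at hi hj
  rcases lt_or_gt_of_ne hij with h | h
  · exact qi_disjoint m u humono i j h hj
  · exact (qi_disjoint m u humono j i h hi).symm

lemma qi_nonneg (m : ℕ) (u : ℕ → ℝ) (hu0 : u 0 = 0)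
    (humono : ∀ j, j + 1 < 2 ^ m → u j < u (j + 1)) :
    ∀ j < 2 ^ m, 0 ≤ u j := by
  intro j hj
  have := u_mono m u humono 0 j (Nat.zero_le j) hj
  linarith [this, hu0.symm.le]

lemma qi_cover (m : ℕ) (u : ℕ → ℝ) (hu0 : u 0 = 0)
    (humono : ∀ j, j + 1 < 2 ^ m → u j < u (j + 1)) :
    ∀ x : ℝ, 0 < x → x ∉ u '' (Set.Iio (2 ^ m)) →
      ∃ j < 2 ^ m, x ∈ quantInterval u m j := by
  intro x hx hxim
  set S := (Finset.range (2 ^ m)).filter (fun i => u i < x) with hS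
  have h0S : 0 ∈ S := by
    simp only [hS, Finset.mem_filter, Finset.mem_range, hu0]
    exact ⟨Nat.pow_pos (by norm_num), hx⟩
  have hne : S.Nonempty := ⟨0, h0S⟩
  set j := S.max' hne with hj
  have hjS : j ∈ S := S.max'_mem hne
  have hjlt : j < 2 ^ m := (Finset.mem_filter.mp hjS).1 |> Finset.mem_range.mp
  have hujx : u j < x := (Finset.mem_filter.mp hjS).2
  refine ⟨j, hjlt, ?_⟩
  unfold quantInterval
  by_cases hlast : j + 1 = 2 ^ m
  · rw [if_pos hlast]; exact hujx
  · rw [if_neg hlast]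
    have hj1 : j + 1 < 2 ^ m := lt_of_le_of_lt (Nat.le_of_eq rfl) (lt_of_le_of_ne (Nat.succ_le_of_lt hjlt) hlast)
    have hnot : j + 1 ∉ S := fun h => absurd (S.le_max' _ h) (by change ¬ j + 1 ≤ j; omega)
    have : ¬ (u (j+1) < x) := fun h => hnot (Finset.mem_filter.mpr ⟨Finset.mem_range.mpr hj1, h⟩)
    have hne' : x ≠ u (j+1) := fun h => hxim ⟨j+1, hj1, h.symm⟩
    exact ⟨hujx, lt_of_le_of_ne (not_lt.mp this) hne'⟩

lemma integrable_of_integral_eq_one (f : ℝ → ℝ) (h : ∫ x, f x = 1) : Integrable f := by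
  by_contra hc
  rw [integral_undef hc] at h
  norm_num at h

/-- Key: at most one quantile interval contains a point; if `x₁ ∈ quantInterval u m j`
then membership of `(x₁,x₂)` in `K` is equivalent to `x₂ ∈ quantInterval v m j`. -/
lemma mem_K_iff (m : ℕ) (u v : ℕ → ℝ)
    (humono : ∀ j, j + 1 < 2 ^ m → u j < u (j + 1))
    (j : ℕ) (hj : j < 2 ^ m) (x₁ : ℝ) (hx₁ : x₁ ∈ quantInterval u m j) (x₂ : ℝ) :
    ((x₁, x₂) ∈ ⋃ i ∈ Finset.range (2 ^ m), (quantInterval u m i) ×ˢ (quantInterval v m i))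
      ↔ x₂ ∈ quantInterval v m j := by
  simp only [Set.mem_iUnion, Finset.mem_range, Set.mem_prod, exists_prop]
  constructor
  · rintro ⟨i, hi, hxi, hx2⟩
    have : i = j := by
      by_contra hne
      rcases lt_or_gt_of_ne hne with h | h
      · exact Set.disjoint_left.mp (qi_disjoint m u humono i j h hj) hxi hx₁
      · exact Set.disjoint_left.mp (qi_disjoint m u humono j i h hi) hx₁ hxi
    exact this ▸ hx2
  · exact fun h => ⟨j, hj, hx₁, h⟩

lemma marginal_aux (f₁ f₂ : ℝ → ℝ)
    (hf₁zero : ∀ x ≤ (0 : ℝ), f₁ x = 0)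
    (m : ℕ) (u v : ℕ → ℝ) (hu0 : u 0 = 0)
    (humono : ∀ j, j + 1 < 2 ^ m → u j < u (j + 1))
    (hvint : ∀ j < 2 ^ m, ∫ x in quantInterval v m j, f₂ x = (1 : ℝ) / 2 ^ m) :
    ∀ᵐ x₁ : ℝ, ∫ x₂ : ℝ,
      (if (x₁, x₂) ∈ ⋃ i ∈ Finset.range (2 ^ m), (quantInterval u m i) ×ˢ (quantInterval v m i)
        then 2 ^ m * f₁ x₁ * f₂ x₂ else 0) = f₁ x₁ := by
  have hnull : volume (u '' (Set.Iio (2 ^ m))) = 0 :=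
    (Set.Finite.image u (Set.finite_Iio _)).measure_zero _
  rw [ae_iff]
  refine measure_mono_null ?_ hnull
  intro x₁ hx₁
  simp only [Set.mem_setOf_eq] at hx₁
  by_contra hxim
  apply hx₁
  rcases le_or_gt x₁ 0 with hle | hpos
  · -- x₁ ≤ 0 : integrand vanishes, and f₁ x₁ = 0
    have hz : ∀ x₂ : ℝ,
        (if (x₁, x₂) ∈ ⋃ i ∈ Finset.range (2 ^ m), (quantInterval u m i) ×ˢ (quantInterval v m i)
          then 2 ^ m * f₁ x₁ * f₂ x₂ else 0) = 0 := by
      intro x₂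
      rw [if_neg]
      simp only [Set.mem_iUnion, Finset.mem_range, Set.mem_prod, exists_prop, not_exists]
      rintro i ⟨hi, hxi, -⟩
      have := qi_subset u m i hxi
      have := qi_nonneg m u hu0 humono i hi
      linarith [Set.mem_Ioi.mp (qi_subset u m i hxi)]
    simp only [hz, integral_zero]
    exact (hf₁zero x₁ hle).symm
  · obtain ⟨j, hj, hxj⟩ := qi_cover m u hu0 humono x₁ hpos hxim
    have heq : ∀ x₂ : ℝ,
        (if (x₁, x₂) ∈ ⋃ i ∈ Finset.range (2 ^ m), (quantInterval u m i) ×ˢ (quantInterval v m i)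
          then 2 ^ m * f₁ x₁ * f₂ x₂ else 0)
        = (quantInterval v m j).indicator (fun x₂ => 2 ^ m * f₁ x₁ * f₂ x₂) x₂ := by
      intro x₂
      rw [Set.indicator_apply]
      by_cases h : x₂ ∈ quantInterval v m j
      · rw [if_pos ((mem_K_iff m u v humono j hj x₁ hxj x₂).mpr h), if_pos h]
      · rw [if_neg (fun hh => h ((mem_K_iff m u v humono j hj x₁ hxj x₂).mp hh)), if_neg h]
    simp only [heq]
    rw [integral_indicator (qi_meas v m j), integral_const_mul, hvint j hj]
    have h2 : (2 : ℝ) ^ m ≠ 0 := by positivity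
    field_simp

/-- With `K_m = ⋃_{j<2^m} (u_{m,j},u_{m,j+1}) × (v_{m,j},v_{m,j+1})` and
`f_m = 2^m f₁(x₁) f₂(x₂)` on `K_m`, `0` elsewhere, the function `f_m` is a probability
density on `ℝ²` whose marginals are `f₁` and `f₂` (a.e.). -/
theorem stmt3 (f₁ f₂ : ℝ → ℝ)
    (hf₁c : Continuous f₁) (hf₂c : Continuous f₂)
    (hf₁pos : ∀ x ∈ Set.Ioi (0 : ℝ), 0 < f₁ x) (hf₂pos : ∀ x ∈ Set.Ioi (0 : ℝ), 0 < f₂ x)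
    (hf₁zero : ∀ x ≤ (0 : ℝ), f₁ x = 0) (hf₂zero : ∀ x ≤ (0 : ℝ), f₂ x = 0)
    (hf₁int : ∫ x, f₁ x = 1) (hf₂int : ∫ x, f₂ x = 1)
    (m : ℕ) (u v : ℕ → ℝ)
    (hu0 : u 0 = 0) (hv0 : v 0 = 0)
    (humono : ∀ j, j + 1 < 2 ^ m → u j < u (j + 1))
    (hvmono : ∀ j, j + 1 < 2 ^ m → v j < v (j + 1))
    (huint : ∀ j < 2 ^ m, ∫ x in quantInterval u m j, f₁ x = (1 : ℝ) / 2 ^ m)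
    (hvint : ∀ j < 2 ^ m, ∫ x in quantInterval v m j, f₂ x = (1 : ℝ) / 2 ^ m)
    (K : Set (ℝ × ℝ))
    (hK : K = ⋃ j ∈ Finset.range (2 ^ m), (quantInterval u m j) ×ˢ (quantInterval v m j))
    (fm : ℝ × ℝ → ℝ)
    (hfm : ∀ p, fm p = if p ∈ K then 2 ^ m * f₁ p.1 * f₂ p.2 else 0) :
    (∀ p, 0 ≤ fm p) ∧
    (∫ p : ℝ × ℝ, fm p = 1) ∧
    (∀ᵐ x₁ : ℝ, ∫ x₂ : ℝ, fm (x₁, x₂) = f₁ x₁) ∧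
    (∀ᵐ x₂ : ℝ, ∫ x₁ : ℝ, fm (x₁, x₂) = f₂ x₂) := by
  have hf₁nn : ∀ x, 0 ≤ f₁ x := fun x => by
    rcases le_or_gt x 0 with h | h
    · rw [hf₁zero x h]
    · exact (hf₁pos x h).le
  have hf₂nn : ∀ x, 0 ≤ f₂ x := fun x => by
    rcases le_or_gt x 0 with h | h
    · rw [hf₂zero x h]
    · exact (hf₂pos x h).le
  have hf₁i : Integrable f₁ := integrable_of_integral_eq_one f₁ hf₁int
  have hf₂i : Integrable f₂ := integrable_of_integral_eq_one f₂ hf₂int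
  have h2 : (2 : ℝ) ^ m ≠ 0 := by positivity
  subst hK
  refine ⟨?_, ?_, ?_, ?_⟩
  · -- nonnegativity
    intro p
    rw [hfm]
    split
    · exact mul_nonneg (mul_nonneg (by positivity) (hf₁nn _)) (hf₂nn _)
    · exact le_rfl
  · -- total integral = 1
    have hfmind : fm = (⋃ j ∈ Finset.range (2 ^ m),
        (quantInterval u m j) ×ˢ (quantInterval v m j)).indicator
        (fun p => 2 ^ m * f₁ p.1 * f₂ p.2) := funext fun p => by
      rw [hfm, Set.indicator_apply]
    have hKmeas : MeasurableSet (⋃ j ∈ Finset.range (2 ^ m),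
        (quantInterval u m j) ×ˢ (quantInterval v m j)) :=
      Finset.measurableSet_biUnion _ fun j _ => (qi_meas u m j).prod (qi_meas v m j)
    rw [hfmind, integral_indicator hKmeas]
    have hgeq : (fun p : ℝ × ℝ => 2 ^ m * f₁ p.1 * f₂ p.2)
        = fun p : ℝ × ℝ => (fun x => 2 ^ m * f₁ x) p.1 * f₂ p.2 := by
      funext p; ring
    rw [integral_biUnion_finset _ (fun j _ => (qi_meas u m j).prod (qi_meas v m j))
        (fun i hi j hj hij => Set.Disjoint.set_prod_left ((qi_pairwise m u humono) hi hj hij) _ _)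
        (fun j _ => by
          unfold IntegrableOn
          rw [Measure.volume_eq_prod, ← Measure.prod_restrict, hgeq]
          exact Integrable.mul_prod (hf₁i.const_mul _).integrableOn hf₂i.integrableOn)]
    have hterm : ∀ j ∈ Finset.range (2 ^ m),
        ∫ p in (quantInterval u m j) ×ˢ (quantInterval v m j),
          2 ^ m * f₁ p.1 * f₂ p.2 = (1 : ℝ) / 2 ^ m := by
      intro j hj
      rw [Finset.mem_range] at hj
      rw [hgeq, Measure.volume_eq_prod,
        setIntegral_prod_mul (fun x => (2:ℝ) ^ m * f₁ x) f₂ _ _,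
        integral_const_mul, huint j hj, hvint j hj]
      field_simp
    rw [Finset.sum_congr rfl hterm, Finset.sum_const, Finset.card_range, nsmul_eq_mul]
    rw [Nat.cast_pow, Nat.cast_ofNat]
    field_simp
  · -- first marginal
    filter_upwards [marginal_aux f₁ f₂ hf₁zero m u v hu0 humono hvint] with x₁ h
    simpa only [hfm] using h
  · -- second marginal
    filter_upwards [marginal_aux f₂ f₁ hf₂zero m v u hv0 hvmono huint] with x₂ h
    rw [← h]
    congr 1
    funext x₁
    rw [hfm]
    by_cases hmem : (x₁, x₂) ∈ ⋃ j ∈ Finset.range (2 ^ m),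
        (quantInterval u m j) ×ˢ (quantInterval v m j)
    · have hmem' : (x₂, x₁) ∈ ⋃ j ∈ Finset.range (2 ^ m),
          (quantInterval v m j) ×ˢ (quantInterval u m j) := by
        simp only [Set.mem_iUnion, Finset.mem_range, Set.mem_prod, exists_prop] at hmem ⊢
        obtain ⟨i, hi, ha, hb⟩ := hmem
        exact ⟨i, hi, hb, ha⟩
      rw [if_pos hmem, if_pos hmem']
      ring
    · rw [if_neg hmem, if_neg]
      simp only [Set.mem_iUnion, Finset.mem_range, Set.mem_prod, exists_prop] at hmem ⊢
      rintro ⟨i, hi, h1, h2⟩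
      exact hmem ⟨i, hi, h2, h1⟩
end

section
/- Let f₁, f₂ be continuous probability densities positive on (0,∞) and vanishing elsewhere, with quantile points u_{m,j}, v_{m,j} as above, and K_m = ⋃_{j=0}^{2^m−1} [u_{m,j}, u_{m,j+1}] × [v_{m,j}, v_{m,j+1}]. Then the sets K_m are nested (K_{m+1} ⊆ K_m up to boundary points) and the intersection K = ⋂_{m≥1} K_m has two-dimensional Lebesgue measure zero. -/
open MeasureTheory Set Filter Real

/-- The closed `j`-th quantile interval at level `m`: `[u j, u (j+1)]`, except the
last one, which is `[u (2^m - 1), +∞)`. -/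
def quantIntervalC (u : ℕ → ℝ) (m j : ℕ) : Set ℝ :=
  if j + 1 = 2 ^ m then Set.Ici (u j) else Set.Icc (u j) (u (j + 1))

lemma quant_weakMono (u : ℕ → ℝ) (n : ℕ) (h : ∀ j, j + 1 < n → u j < u (j + 1))
    {i j : ℕ} (hij : i ≤ j) (hj : j < n) : u i ≤ u j := by
  induction j with
  | zero => simp_all
  | succ k ih =>
    rcases Nat.lt_or_ge i (k + 1) with h1 | h1
    · exact le_trans (ih (Nat.lt_succ_iff.mp h1) (by omega)) (le_of_lt (h k hj))
    · have : i = k + 1 := le_antisymm hij h1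
      simp [this]

lemma quant_mem_lower {u : ℕ → ℝ} {m j : ℕ} {x : ℝ} (hx : x ∈ quantIntervalC u m j) :
    u j ≤ x := by
  unfold quantIntervalC at hx
  split at hx
  · exact hx
  · exact hx.1

lemma quant_mem_upper {u : ℕ → ℝ} {m j : ℕ} {x : ℝ} (hj : j + 1 ≠ 2 ^ m)
    (hx : x ∈ quantIntervalC u m j) : x ≤ u (j + 1) := by
  unfold quantIntervalC at hx
  rw [if_neg hj] at hx
  exact hx.2

lemma quant_ordConn (u : ℕ → ℝ) (m j : ℕ) : Set.OrdConnected (quantIntervalC u m j) := by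
  unfold quantIntervalC
  split
  · exact Set.ordConnected_Ici
  · exact Set.ordConnected_Icc

lemma quant_closed (u : ℕ → ℝ) (m j : ℕ) : IsClosed (quantIntervalC u m j) := by
  unfold quantIntervalC
  split
  · exact isClosed_Ici
  · exact isClosed_Icc

lemma quant_refine (u : ℕ → ℕ → ℝ) (m j : ℕ) (hj : j < 2 ^ (m + 1))
    (humono : ∀ m, ∀ j, j + 1 < 2 ^ m → u m j < u m (j + 1))
    (huref : ∀ m, ∀ j < 2 ^ m, u (m + 1) (2 * j) = u m j) :
    quantIntervalC (u (m + 1)) (m + 1) j ⊆ quantIntervalC (u m) m (j / 2) := by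
  set q := j / 2 with hq
  have h2 : 2 ^ (m + 1) = 2 * 2 ^ m := by ring
  have hq2 : q < 2 ^ m := by omega
  have hlow : u m q ≤ u (m + 1) j := by
    rw [← huref m q hq2]
    exact quant_weakMono (u (m + 1)) (2 ^ (m + 1)) (humono (m + 1)) (by omega) hj
  unfold quantIntervalC
  by_cases hlast : q + 1 = 2 ^ m
  · rw [if_pos hlast]
    split
    · exact fun x hx => le_trans hlow hx
    · exact fun x hx => le_trans hlow hx.1
  · rw [if_neg hlast]
    have hq1 : q + 1 < 2 ^ m := by omega
    have hup : u (m + 1) (j + 1) ≤ u m (q + 1) := by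
      rw [← huref m (q + 1) hq1]
      exact quant_weakMono (u (m + 1)) (2 ^ (m + 1)) (humono (m + 1)) (by omega) (by omega)
    have hj1 : j + 1 ≠ 2 ^ (m + 1) := by omega
    rw [if_neg hj1]
    exact Set.Icc_subset_Icc hlow hup

/-- With `K_m = ⋃_{j<2^m} [u_{m,j},u_{m,j+1}] × [v_{m,j},v_{m,j+1}]`
built from the dyadic quantile points of `f₁` and `f₂`, the sets `K_m` are nested
and their intersection has two-dimensional Lebesgue measure zero. -/
theorem stmt4 (f₁ f₂ : ℝ → ℝ)
    (hf₁c : Continuous f₁) (hf₂c : Continuous f₂)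
    (hf₁pos : ∀ x ∈ Set.Ioi (0 : ℝ), 0 < f₁ x) (hf₂pos : ∀ x ∈ Set.Ioi (0 : ℝ), 0 < f₂ x)
    (hf₁zero : ∀ x ≤ (0 : ℝ), f₁ x = 0) (hf₂zero : ∀ x ≤ (0 : ℝ), f₂ x = 0)
    (hf₁int : ∫ x, f₁ x = 1) (hf₂int : ∫ x, f₂ x = 1)
    (u v : ℕ → ℕ → ℝ)
    (hu0 : ∀ m, u m 0 = 0) (hv0 : ∀ m, v m 0 = 0)
    (huint : ∀ m, ∀ j < 2 ^ m, ∫ x in quantIntervalC (u m) m j, f₁ x = (1 : ℝ) / 2 ^ m)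
    (hvint : ∀ m, ∀ j < 2 ^ m, ∫ x in quantIntervalC (v m) m j, f₂ x = (1 : ℝ) / 2 ^ m)
    (humono : ∀ m, ∀ j, j + 1 < 2 ^ m → u m j < u m (j + 1))
    (hvmono : ∀ m, ∀ j, j + 1 < 2 ^ m → v m j < v m (j + 1))
    (huref : ∀ m, ∀ j < 2 ^ m, u (m + 1) (2 * j) = u m j)
    (hvref : ∀ m, ∀ j < 2 ^ m, v (m + 1) (2 * j) = v m j)
    (K : ℕ → Set (ℝ × ℝ))
    (hK : ∀ m, K m = ⋃ j ∈ Finset.range (2 ^ m),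
      (quantIntervalC (u m) m j) ×ˢ (quantIntervalC (v m) m j)) :
    (∀ m, K (m + 1) ⊆ K m) ∧ (volume : Measure (ℝ × ℝ)) (⋂ m, K m) = 0 := by
  have humono' : ∀ m, ∀ i j, i ≤ j → j < 2 ^ m → u m i ≤ u m j :=
    fun m i j hij hj => quant_weakMono (u m) (2 ^ m) (humono m) hij hj
  have hvmono' : ∀ m, ∀ i j, i ≤ j → j < 2 ^ m → v m i ≤ v m j :=
    fun m i j hij hj => quant_weakMono (v m) (2 ^ m) (hvmono m) hij hj
  have hnest : ∀ m, K (m + 1) ⊆ K m := by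
    intro m p hp
    rw [hK] at hp ⊢
    simp only [Set.mem_iUnion, Finset.mem_range, Set.mem_prod] at hp ⊢
    obtain ⟨j, hj, hpx, hpy⟩ := hp
    have h2 : 2 ^ (m + 1) = 2 * 2 ^ m := by ring
    refine ⟨j / 2, by omega, ?_, ?_⟩
    · exact quant_refine u m j hj humono huref hpx
    · exact quant_refine v m j hj hvmono hvref hpy
  refine ⟨hnest, ?_⟩
  set Kinf := ⋂ m, K m with hKinf
  have hKclosed : IsClosed Kinf := by
    apply isClosed_iInter
    intro m
    rw [hK]
    apply isClosed_biUnion_finset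
    intro j _
    exact (quant_closed (u m) m j).prod (quant_closed (v m) m j)
  have hf₁m : Integrable f₁ := by
    by_contra h
    rw [MeasureTheory.integral_undef h] at hf₁int
    norm_num at hf₁int
  have hf₁nn : ∀ x, 0 ≤ f₁ x := by
    intro x
    rcases le_or_gt x 0 with h | h
    · exact le_of_eq (hf₁zero x h).symm
    · exact (hf₁pos x h).le
  -- every point of Kinf has nonnegative first coordinate
  have hx1nn : ∀ p ∈ Kinf, (0 : ℝ) ≤ p.1 := by
    intro p hp
    have h0 := Set.mem_iInter.mp hp 0
    rw [hK 0] at h0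
    simp only [Set.mem_iUnion, Finset.mem_range, Set.mem_prod] at h0
    obtain ⟨j, hj, hx, _⟩ := h0
    have : j = 0 := by omega
    subst this
    have := quant_mem_lower hx
    rwa [hu0 0] at this
  -- monotonicity of Kinf
  have hmonoK : ∀ p ∈ Kinf, ∀ r ∈ Kinf, p.1 < r.1 → p.2 ≤ r.2 := by
    intro p hp r hr hlt
    have hpnn := hx1nn p hp
    have hc : 0 < ∫ x in p.1..r.1, f₁ x := by
      apply intervalIntegral.intervalIntegral_pos_of_pos_on (hf₁m.intervalIntegrable)
      · intro x hx
        exact hf₁pos x (lt_of_le_of_lt hpnn hx.1)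
      · exact hlt
    obtain ⟨m, hm⟩ := exists_pow_lt_of_lt_one hc (by norm_num : (1 : ℝ) / 2 < 1)
    have hm' : (1 : ℝ) / 2 ^ m < ∫ x in p.1..r.1, f₁ x := by
      rwa [div_pow, one_pow] at hm
    have hpK := Set.mem_iInter.mp hp m
    have hrK := Set.mem_iInter.mp hr m
    rw [hK m] at hpK hrK
    simp only [Set.mem_iUnion, Finset.mem_range, Set.mem_prod] at hpK hrK
    obtain ⟨j₁, hj₁, hx₁, hy₁⟩ := hpK
    obtain ⟨j₂, hj₂, hx₂, hy₂⟩ := hrK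
    have hne : j₁ ≠ j₂ := by
      rintro rfl
      have hsub : Set.Ioc p.1 r.1 ⊆ quantIntervalC (u m) m j₁ :=
        Set.Ioc_subset_Icc_self.trans ((quant_ordConn (u m) m j₁).out hx₁ hx₂)
      have h1 : ∫ t in Set.Ioc p.1 r.1, f₁ t ≤ ∫ t in quantIntervalC (u m) m j₁, f₁ t :=
        MeasureTheory.setIntegral_mono_set hf₁m.integrableOn
          (Filter.Eventually.of_forall fun t => hf₁nn t)
          (HasSubset.Subset.eventuallyLE hsub)
      rw [huint m j₁ hj₁] at h1
      rw [intervalIntegral.integral_of_le hlt.le] at hm'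
      linarith
    have hlt12 : j₁ < j₂ := by
      rcases lt_or_gt_of_ne hne with h | h
      · exact h
      · exfalso
        have h1 : r.1 ≤ u m (j₂ + 1) := quant_mem_upper (by omega) hx₂
        have h2 : u m (j₂ + 1) ≤ u m j₁ := humono' m _ _ (by omega) hj₁
        have h3 : u m j₁ ≤ p.1 := quant_mem_lower hx₁
        linarith
    have h1 : p.2 ≤ v m (j₁ + 1) := quant_mem_upper (by omega) hy₁
    have h2 : v m (j₁ + 1) ≤ v m j₂ := hvmono' m _ _ (by omega) hj₂
    have h3 : v m j₂ ≤ r.2 := quant_mem_lower hy₂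
    linarith
  -- the set of x with non-null section is countable
  set S : Set ℝ := {x | volume (Prod.mk x ⁻¹' Kinf) ≠ 0} with hSdef
  have hex : ∀ x, x ∈ S → ∃ qr : ℚ, ∃ y₂ : ℝ, (x, y₂) ∈ Kinf ∧
      (∃ y₁ : ℝ, (x, y₁) ∈ Kinf ∧ y₁ < (qr : ℝ)) ∧ (qr : ℝ) < y₂ := by
    intro x hx
    have hns : ¬ (Prod.mk x ⁻¹' Kinf).Subsingleton := by
      intro hsub
      exact hx (hsub.measure_zero volume)
    rw [Set.not_subsingleton_iff] at hns
    obtain ⟨a, ha, b, hb, hab⟩ := hns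
    rcases lt_or_gt_of_ne hab with h | h
    · obtain ⟨qr, hq1, hq2⟩ := exists_rat_btwn h
      exact ⟨qr, b, hb, ⟨a, ha, hq1⟩, hq2⟩
    · obtain ⟨qr, hq1, hq2⟩ := exists_rat_btwn h
      exact ⟨qr, a, ha, ⟨b, hb, hq1⟩, hq2⟩
  choose! q y₂ hy₂ hy₁ex hqlt using hex
  have hqmono : ∀ x ∈ S, ∀ x' ∈ S, x < x' → q x < q x' := by
    intro x hx x' hx' hlt
    obtain ⟨y₁, hy₁, hy₁q⟩ := hy₁ex x' hx'
    have h1 : y₂ x ≤ y₁ := hmonoK (x, y₂ x) (hy₂ x hx) (x', y₁) hy₁ hlt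
    have : (q x : ℝ) < (q x' : ℝ) := lt_of_lt_of_le (hqlt x hx) (le_trans h1 hy₁q.le)
    exact_mod_cast this
  have hS : S.Countable := by
    rw [← Set.countable_coe_iff]
    have : Function.Injective (fun x : S => q x) := by
      intro a b hab
      rcases lt_trichotomy (a : ℝ) (b : ℝ) with h | h | h
      · exact absurd hab (ne_of_lt (hqmono a a.2 b b.2 h))
      · exact Subtype.ext h
      · exact absurd hab.symm (ne_of_lt (hqmono b b.2 a a.2 h))
    exact this.countable
  have hmeas : MeasurableSet Kinf := hKclosed.measurableSet
  rw [MeasureTheory.Measure.volume_eq_prod, MeasureTheory.Measure.prod_apply hmeas]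
  have h0 : (fun x => volume (Prod.mk x ⁻¹' Kinf)) =ᵐ[volume] 0 := by
    rw [Filter.EventuallyEq, MeasureTheory.ae_iff]
    exact measure_mono_null (fun x hx => hx) (hS.measure_zero _)
  rw [MeasureTheory.lintegral_congr_ae h0]
  simp
end
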